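/- arXiv:0802.2076 — 5 statements merged into one kernel-verified Lean document; each statement's English description precedes it below -/
import Mathlib

section
/- Let A be a unital C*-algebra, α an automorphism of A, and E : A → A a bounded linear projection onto the fixed-point subalgebra of α. Suppose that for every a ∈ A with E(a) = 0 and every strictly increasing sequence (n_k) of natural numbers, lim_{n→∞} (1/n) ‖Σ_{k=1}^{n} α^{n_k}(a)‖ = 0. Then for every bounded linear functional φ on A and every a ∈ A, lim_{n→∞} φ(αⁿ(a)) = φ(E(a)). -/
open Filter Finset

/-- Norm convergence to zero of the Cesàro means along every subsequence, for
elements with vanishing conditional expectation, implies E-mixing. -/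
theorem stmt2 {A : Type*} [NormedRing A] [StarRing A] [CStarRing A]
    [NormedAlgebra ℂ A] [StarModule ℂ A] [CompleteSpace A]
    (α : A ≃⋆ₐ[ℂ] A) (E : A →L[ℂ] A)
    (hproj : ∀ a : A, E (E a) = E a)
    (hfix : ∀ a : A, α (E a) = E a)
    (honto : ∀ a : A, α a = a → E a = a)
    (hces : ∀ a : A, E a = 0 → ∀ nk : ℕ → ℕ, StrictMono nk →
      Tendsto (fun n : ℕ => (1 / n : ℝ) * ‖∑ k ∈ range n, (⇑α)^[nk k] a‖)
        atTop (nhds 0)) :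
    ∀ φ : A →L[ℂ] ℂ, ∀ a : A,
      Tendsto (fun n : ℕ => φ ((⇑α)^[n] a)) atTop (nhds (φ (E a))) := by
  letI : CStarAlgebra A := { }
  intro φ a
  set b := a - E a with hb
  have hEb : E b = 0 := by simp [hb, map_sub, hproj]
  have hnorm : ∀ m : ℕ, ‖(⇑α)^[m] b‖ ≤ ‖b‖ := by
    intro m
    induction m with
    | zero => simp
    | succ m ih =>
      rw [Function.iterate_succ_apply']
      exact le_trans (NonUnitalStarAlgHom.norm_apply_le α _) ih
  have hiter : ∀ n : ℕ, (⇑α)^[n] a = (⇑α)^[n] b + E a := by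
    intro n
    induction n with
    | zero => simp [hb]
    | succ n ih =>
      rw [Function.iterate_succ_apply', Function.iterate_succ_apply', ih,
        map_add, hfix]
  have key : Tendsto (fun n : ℕ => φ ((⇑α)^[n] b)) atTop (nhds 0) := by
    apply tendsto_of_subseq_tendsto
    intro ns hns
    obtain ⟨g, hg⟩ := strictMono_subseq_of_tendsto_atTop hns
    have hbd : ∀ n : ℕ, φ ((⇑α)^[(ns ∘ g) n] b) ∈ Metric.closedBall (0 : ℂ) (‖φ‖ * ‖b‖) := by
      intro n
      rw [Metric.mem_closedBall, dist_zero_right]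
      exact le_trans (φ.le_opNorm _) (mul_le_mul_of_nonneg_left (hnorm _) φ.opNorm_nonneg)
    obtain ⟨c, -, h, hh, hlim⟩ :=
      tendsto_subseq_of_bounded Metric.isBounded_closedBall hbd
    set nk : ℕ → ℕ := ns ∘ g ∘ h with hnk
    have hnkmono : StrictMono nk := hg.2.comp hh
    have hces' := hces b hEb nk hnkmono
    -- Cesàro mean of the subsequence tends to 0
    have h2 : Tendsto (fun n : ℕ => (n⁻¹ : ℝ) • ∑ i ∈ range n, φ ((⇑α)^[nk i] b))
        atTop (nhds 0) := by
      have hgt : Tendsto (fun n : ℕ => ‖φ‖ * ((1 / n : ℝ) * ‖∑ k ∈ range n, (⇑α)^[nk k] b‖))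
          atTop (nhds 0) := by simpa using hces'.const_mul ‖φ‖
      apply squeeze_zero_norm _ hgt
      · intro n
        rw [norm_smul, ← map_sum]
        calc ‖(n⁻¹ : ℝ)‖ * ‖φ (∑ i ∈ range n, (⇑α)^[nk i] b)‖
            ≤ ‖(n⁻¹ : ℝ)‖ * (‖φ‖ * ‖∑ i ∈ range n, (⇑α)^[nk i] b‖) := by
              gcongr; exact φ.le_opNorm _
          _ = ‖φ‖ * ((1 / n : ℝ) * ‖∑ k ∈ range n, (⇑α)^[nk k] b‖) := by
              rw [Real.norm_eq_abs, abs_of_nonneg (by positivity), one_div]; ring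
    have h1 : Tendsto (fun n : ℕ => (n⁻¹ : ℝ) • ∑ i ∈ range n, φ ((⇑α)^[nk i] b))
        atTop (nhds c) := Filter.Tendsto.cesaro_smul hlim
    have hc : c = 0 := tendsto_nhds_unique h1 h2
    exact ⟨g ∘ h, by simpa [hc, hnk, Function.comp_def] using hlim⟩
  have : Tendsto (fun n : ℕ => φ ((⇑α)^[n] b) + φ (E a)) atTop (nhds (0 + φ (E a))) :=
    key.add_const _
  rw [zero_add] at this
  refine this.congr fun n => ?_
  rw [hiter n, map_add]
end

section
/- Let X be a compact metric space, T : X → X a homeomorphism, and μ a T-invariant Borel probability measure on X such that for every Borel probability measure ν on X and every continuous function f : X → ℂ, lim_{n→∞} ∫ f∘Tⁿ dν = ∫ f dμ. Then the support of μ is a single point, i.e., there exists x* ∈ X with μ = δ_{x*}. -/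
open Filter MeasureTheory

/-- If a classical compact metric dynamical system converges to equilibrium
(the quantum unique-mixing property tested on all states of `C(X)`), then the
unique invariant measure is a Dirac measure. -/
theorem stmt6 {X : Type*} [MetricSpace X] [CompactSpace X]
    [MeasurableSpace X] [BorelSpace X]
    (T : X ≃ₜ X) (μ : Measure X) [IsProbabilityMeasure μ]
    (hinv : ∀ s : Set X, MeasurableSet s → μ (⇑T ⁻¹' s) = μ s)
    (hmix : ∀ ν : Measure X, IsProbabilityMeasure ν → ∀ f : C(X, ℂ),
      Tendsto (fun n : ℕ => ∫ x, f ((⇑T)^[n] x) ∂ν) atTop (nhds (∫ x, f x ∂μ))) :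
    ∃ x₀ : X, μ = Measure.dirac x₀ := by
  -- X is nonempty
  have hne : Nonempty X := by
    by_contra h
    rw [not_nonempty_iff] at h
    have h1 : μ Set.univ = 1 := measure_univ
    rw [Set.univ_eq_empty_iff.mpr h, measure_empty] at h1
    exact zero_ne_one h1
  obtain ⟨x⟩ := hne
  -- the orbit of x has a convergent subsequence
  obtain ⟨x₀, -, φ, hφmono, hφlim⟩ :=
    isCompact_univ.tendsto_subseq (x := fun n => (⇑T)^[n] x) (fun n => Set.mem_univ _)
  refine ⟨x₀, ?_⟩
  -- key: every continuous complex function integrates to its value at x₀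
  have key : ∀ g : C(X, ℂ), ∫ y, g y ∂μ = g x₀ := by
    intro g
    have h1 := hmix (Measure.dirac x) inferInstance g
    have h2 : ∀ n : ℕ, ∫ y, g ((⇑T)^[n] y) ∂(Measure.dirac x) = g ((⇑T)^[n] x) := by
      intro n
      exact integral_dirac _ x
    simp_rw [h2] at h1
    have h3 : Tendsto (fun k => g ((⇑T)^[φ k] x)) atTop (nhds (∫ y, g y ∂μ)) :=
      h1.comp hφmono.tendsto_atTop
    have h4 : Tendsto (fun k => g ((⇑T)^[φ k] x)) atTop (nhds (g x₀)) :=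
      (g.continuous.tendsto x₀).comp hφlim
    exact tendsto_nhds_unique h3 h4
  -- conclude measures agree on bounded continuous ℝ≥0 functions
  apply ext_of_forall_lintegral_eq_of_IsFiniteMeasure
  intro f
  have hreal : ∫ y, ((f y : ℝ) : ℂ) ∂μ = ((f x₀ : ℝ) : ℂ) := by
    have := key ⟨fun y => ((f y : ℝ) : ℂ),
      Complex.continuous_ofReal.comp (NNReal.continuous_coe.comp f.continuous)⟩
    simpa using this
  have hr : ∫ y, (f y : ℝ) ∂μ = (f x₀ : ℝ) := by
    have h : ((∫ y, (f y : ℝ) ∂μ : ℝ) : ℂ) = ((f x₀ : ℝ) : ℂ) :=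
      (integral_ofReal (𝕜 := ℂ)).symm.trans hreal
    exact_mod_cast h
  have hint : Integrable (fun y => (f y : ℝ)) μ :=
    BoundedContinuousFunction.integrable_of_nnreal μ f
  rw [lintegral_dirac, lintegral_coe_eq_integral _ hint, hr, ENNReal.ofReal_coe_nnreal]
end

section
/- Let X be a compact metric space and T : X → X a homeomorphism such that for all x ∈ X and all continuous f : X → ℂ, the sequence f(Tⁿx) converges and its limit ∫f dμ is independent of x, where μ is a T-invariant Borel probability measure with support equal to X. Then X is a singleton. -/
open Filter MeasureTheory

/-- If unique mixing holds tested on Dirac point measures with a fully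
supported invariant measure, then the space is a singleton. -/
theorem stmt7 {X : Type*} [MetricSpace X] [CompactSpace X]
    [MeasurableSpace X] [BorelSpace X]
    (T : X ≃ₜ X) (μ : Measure X) [IsProbabilityMeasure μ]
    (hinv : ∀ s : Set X, MeasurableSet s → μ (⇑T ⁻¹' s) = μ s)
    (hfull : ∀ U : Set X, IsOpen U → U.Nonempty → 0 < μ U)
    (hmix : ∀ x : X, ∀ f : C(X, ℂ),
      Tendsto (fun n : ℕ => f ((⇑T)^[n] x)) atTop (nhds (∫ y, f y ∂μ))) :
    ∃ x : X, ∀ y : X, y = x := by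
  have hne : Nonempty X := by
    by_contra h
    have h0 : μ Set.univ = 0 := by
      have : (Set.univ : Set X) = ∅ := by
        simpa [Set.eq_empty_iff_forall_notMem] using fun x => h ⟨x⟩
      simp [this]
    simp [measure_univ] at h0
  obtain ⟨x⟩ := hne
  -- extract a convergent subsequence of the orbit of x
  obtain ⟨z, -, φ, hφ, hz⟩ := IsCompact.tendsto_subseq (x := fun n => (⇑T)^[n] x)
    (isCompact_univ) (fun n => Set.mem_univ _)
  -- every continuous complex function has integral f z
  have key : ∀ f : C(X, ℂ), f z = ∫ y, f y ∂μ := by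
    intro f
    have h1 : Tendsto (fun k => f ((⇑T)^[φ k] x)) atTop (nhds (∫ y, f y ∂μ)) :=
      (hmix x f).comp hφ.tendsto_atTop
    have h2 : Tendsto (fun k => f ((⇑T)^[φ k] x)) atTop (nhds (f z)) :=
      (f.continuous.tendsto z).comp hz
    exact tendsto_nhds_unique h2 h1
  refine ⟨z, fun y => ?_⟩
  by_contra hy
  set ε : ℝ := dist y z with hε
  have hεpos : 0 < ε := dist_pos.mpr hy
  -- a real bump function vanishing at z and ≥ 1/2 near y
  set g : X → ℝ := fun w => max 0 (1 - (2 / ε) * dist w y) with hg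
  have hgc : Continuous g := by
    apply continuous_const.max
    fun_prop
  have hg0 : ∀ w, 0 ≤ g w := fun w => le_max_left _ _
  have hgz : g z = 0 := by
    have : dist z y = ε := by rw [dist_comm]
    simp only [hg, this]
    have : 1 - (2 / ε) * ε ≤ 0 := by
      rw [div_mul_cancel₀ _ hεpos.ne']
      norm_num
    exact max_eq_left this
  -- integral of g is 0 via key
  have hfc : Continuous fun w => ((g w : ℂ)) := Complex.continuous_ofReal.comp hgc
  have hint : ∫ w, g w ∂μ = 0 := by
    have := key ⟨fun w => (g w : ℂ), hfc⟩
    simp only [ContinuousMap.coe_mk] at this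
    have h3 : ∫ w, ((g w : ℂ)) ∂μ = ((∫ w, g w ∂μ : ℝ) : ℂ) := integral_ofReal
    have h2 : ((g z : ℂ)) = ((∫ w, g w ∂μ : ℝ) : ℂ) := this.trans h3
    have := Complex.ofReal_injective h2
    rw [hgz] at this
    exact this.symm
  -- but the integral is positive
  have hgi : Integrable g μ := hgc.integrable_of_hasCompactSupport
    (HasCompactSupport.of_compactSpace _)
  have hpos : 0 < ∫ w, g w ∂μ := by
    rw [integral_pos_iff_support_of_nonneg hg0 hgi]
    have hsub : Metric.ball y (ε / 4) ⊆ Function.support g := by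
      intro w hw
      have hw' : dist w y < ε / 4 := Metric.mem_ball.mp hw
      have : (2 / ε) * dist w y ≤ 1 / 2 := by
        calc (2 / ε) * dist w y ≤ (2 / ε) * (ε / 4) :=
              mul_le_mul_of_nonneg_left hw'.le (by positivity)
          _ = 1 / 2 := by field_simp; ring
      have hgw : 0 < g w := by
        have : (0:ℝ) < 1 - (2 / ε) * dist w y := by linarith
        exact lt_of_lt_of_le this (le_max_right _ _)
      exact hgw.ne'
    have hball : 0 < μ (Metric.ball y (ε / 4)) :=
      hfull _ Metric.isOpen_ball ⟨y, Metric.mem_ball_self (by positivity)⟩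
    exact lt_of_lt_of_le hball (measure_mono hsub)
  rw [hint] at hpos
  exact lt_irrefl 0 hpos
end

section
/- Let A be a unital C*-algebra, α an automorphism, ω an α-invariant state, and suppose the system is asymptotically Abelian: lim_{n→∞} ω(c[αⁿ(a), b]d) = 0 for all a, b, c, d ∈ A, where [x,y] = xy − yx. If ω is mixing, i.e., lim_{n→∞} ω(a αⁿ(b)) = ω(a)ω(b) for all a, b ∈ A, then lim_{n→∞} ω(b αⁿ(a) c) = ω(bc)ω(a) for all a, b, c ∈ A. -/
open Filter

/-- A state on a unital C*-algebra: a continuous linear functional that is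
unital and positive. -/
def IsState {A : Type*} [NormedRing A] [StarRing A] [NormedAlgebra ℂ A]
    (φ : A →L[ℂ] ℂ) : Prop :=
  φ 1 = 1 ∧ ∀ a : A, 0 ≤ (φ (star a * a)).re ∧ (φ (star a * a)).im = 0

/-- For an asymptotically Abelian system, mixing implies the three-point
mixing property `ω(b αⁿ(a) c) → ω(bc)ω(a)`. -/
theorem stmt11 {A : Type*} [NormedRing A] [StarRing A] [CStarRing A]
    [NormedAlgebra ℂ A] [StarModule ℂ A] [CompleteSpace A]
    (α : A ≃⋆ₐ[ℂ] A) (ω : A →L[ℂ] ℂ) (hω : IsState ω)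
    (hinv : ∀ a : A, ω (α a) = ω a)
    (habel : ∀ a b c d : A,
      Tendsto (fun n : ℕ => ω (c * ((⇑α)^[n] a * b - b * (⇑α)^[n] a) * d))
        atTop (nhds 0))
    (hmix : ∀ a b : A,
      Tendsto (fun n : ℕ => ω (a * (⇑α)^[n] b)) atTop (nhds (ω a * ω b))) :
    ∀ a b c : A,
      Tendsto (fun n : ℕ => ω (b * (⇑α)^[n] a * c)) atTop (nhds (ω (b * c) * ω a)) := by
  intro a b c
  have h1 := hmix (b * c) a
  have h2 := habel a c b 1
  have key : (fun n : ℕ => ω (b * (⇑α)^[n] a * c))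
      = fun n : ℕ => ω (b * c * (⇑α)^[n] a)
        + ω (b * ((⇑α)^[n] a * c - c * (⇑α)^[n] a) * 1) := by
    funext n
    rw [← map_add]
    congr 1
    noncomm_ring
  rw [key]
  simpa using h1.add h2
end

section
/- Let A be a unital C*-algebra, α an automorphism, ω an α-invariant state, with asymptotic Abelianess: (1/n) Σ_{k=0}^{n-1} |ω(b[αᵏ(a), c])| → 0 for all a, b, c ∈ A. If the system is weakly mixing, i.e., (1/n) Σ_{k=0}^{n-1} |ω(a αᵏ(b)) − ω(a)ω(b)| → 0 for all a, b, then (1/n) Σ_{k=0}^{n-1} |ω(b αᵏ(a) c) − ω(bc)ω(a)| → 0 for all a, b, c ∈ A. -/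
open Filter Finset

/-- For a Cesàro asymptotically Abelian system, weak mixing implies the
three-point weak mixing property. -/
theorem stmt12 {A : Type*} [NormedRing A] [StarRing A] [CStarRing A]
    [NormedAlgebra ℂ A] [StarModule ℂ A] [CompleteSpace A]
    (α : A ≃⋆ₐ[ℂ] A) (ω : A →L[ℂ] ℂ) (hω : IsState ω)
    (hinv : ∀ a : A, ω (α a) = ω a)
    (habel : ∀ a b c : A,
      Tendsto (fun n : ℕ =>
          (1 / n : ℝ) * ∑ k ∈ range n, ‖ω (b * ((⇑α)^[k] a * c - c * (⇑α)^[k] a))‖)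
        atTop (nhds 0))
    (hwm : ∀ a b : A,
      Tendsto (fun n : ℕ =>
          (1 / n : ℝ) * ∑ k ∈ range n, ‖ω (a * (⇑α)^[k] b) - ω a * ω b‖)
        atTop (nhds 0)) :
    ∀ a b c : A,
      Tendsto (fun n : ℕ =>
          (1 / n : ℝ) * ∑ k ∈ range n, ‖ω (b * (⇑α)^[k] a * c) - ω (b * c) * ω a‖)
        atTop (nhds 0) := by
  intro a b c
  have h1 := hwm (b * c) a
  have h2 := habel a b c
  have hsum := h1.add h2
  rw [add_zero] at hsum
  refine squeeze_zero (g := fun n : ℕ =>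
      (1 / n : ℝ) * ∑ k ∈ range n, ‖ω (b * c * (⇑α)^[k] a) - ω (b * c) * ω a‖
        + (1 / n : ℝ) * ∑ k ∈ range n, ‖ω (b * ((⇑α)^[k] a * c - c * (⇑α)^[k] a))‖)
      (fun n => ?_) (fun n => ?_) hsum
  · positivity
  · rw [← mul_add, ← Finset.sum_add_distrib]
    refine mul_le_mul_of_nonneg_left (Finset.sum_le_sum fun k hk => ?_) (by positivity)
    have key : ω (b * (⇑α)^[k] a * c) - ω (b * c) * ω a
        = (ω (b * c * (⇑α)^[k] a) - ω (b * c) * ω a)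
          + ω (b * ((⇑α)^[k] a * c - c * (⇑α)^[k] a)) := by
      rw [mul_sub, map_sub, ← mul_assoc, ← mul_assoc]
      ring
    rw [key]
    exact norm_add_le _ _
end
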